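/- (Theorem 4 vi, Lundberg bound) In the discrete-time risk model, assume the net profit condition p·μ < 1, and suppose there exists z > 1 such that 1 − p + p1·E[z^{Y1_1}] + p0·E[z^{Y3_1 + Y4_1}] + p2·E[z^{Y2_1}] = z. Then the sequence {z^{S̃(n)}, n = 0, 1, 2, …}, where S̃(n) = Σ_{i=1}^{n} (I_{A_i}·Y_i − 1), is a martingale with respect to its natural filtration, and the ruin probability satisfies ψ(u) ≤ z^{−u} for every initial capital u ≥ 0. -/

import Mathlib

open MeasureTheory ProbabilityTheory Finset
open scoped ENNReal NNReal

lemma indep_mono' {Ω : Type*} {m0 m₁ m₂ m₁' m₂' : MeasurableSpace Ω} {μ : @Measure Ω m0}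
    (h : @Indep Ω m₁ m₂ m0 μ) (h1 : m₁' ≤ m₁) (h2 : m₂' ≤ m₂) : @Indep Ω m₁' m₂' m0 μ := by
  rw [Indep_iff] at h ⊢
  exact fun t1 t2 ht1 ht2 => h t1 t2 (h1 _ ht1) (h2 _ ht2)

lemma meas_biSup {Ω ιt β δ : Type*} [mβ : MeasurableSpace β] [mδ : MeasurableSpace δ]
    (G : ιt → Ω → β) (S : Set ιt) {i : ιt} (hi : i ∈ S) {φ : β → δ} (hφ : Measurable φ) :
    Measurable[⨆ j ∈ S, MeasurableSpace.comap (G j) mβ] (fun ω => φ (G i ω)) := by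
  refine Measurable.of_comap_le ?_
  have h1 : MeasurableSpace.comap (fun ω => φ (G i ω)) mδ
      = MeasurableSpace.comap (G i) (MeasurableSpace.comap φ mδ) :=
    MeasurableSpace.comap_comp.symm
  rw [h1]
  exact le_trans (MeasurableSpace.comap_mono hφ.comap_le)
    (le_biSup (fun j => MeasurableSpace.comap (G j) mβ) hi)

/-- index of a coordinate in the five-fold sum type -/
def sidx : ℕ ⊕ ℕ ⊕ ℕ ⊕ ℕ ⊕ ℕ → ℕ :=
  Sum.elim id (Sum.elim id (Sum.elim id (Sum.elim id id)))

/-- `(I1, I2, I0)` takes the values `(1,0,0)`, `(0,1,0)`, `(0,0,1)` with probabilities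
`p1/p`, `p2/p`, `p0/p` respectively, where `p = p0 + p1 + p2`. -/
def IsIndicatorTriple {Ω : Type*} [MeasureSpace Ω] (p0 p1 p2 : ℝ)
    (I1 I2 I0 : Ω → ℕ) : Prop :=
  Measurable I1 ∧ Measurable I2 ∧ Measurable I0 ∧
  (ℙ {ω | I1 ω = 1 ∧ I2 ω = 0 ∧ I0 ω = 0}).toReal = p1 / (p0 + p1 + p2) ∧
  (ℙ {ω | I1 ω = 0 ∧ I2 ω = 1 ∧ I0 ω = 0}).toReal = p2 / (p0 + p1 + p2) ∧
  (ℙ {ω | I1 ω = 0 ∧ I2 ω = 0 ∧ I0 ω = 1}).toReal = p0 / (p0 + p1 + p2)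

/-- Theorem 4 vi, Lundberg bound: if `z > 1` solves the Lundberg equation
`1 − p + p1·E[z^{Y1}] + p0·E[z^{Y3+Y4}] + p2·E[z^{Y2}] = z`, then `{z^{S̃(n)}}` is a
martingale with respect to the natural filtration of the random walk `S̃`, and the ruin
probability satisfies `ψ(u) ≤ z^{−u}` for every initial capital `u`. -/
theorem lundberg_martingale_and_ruin_bound
    {Ω : Type*} [MeasureSpace Ω] [IsProbabilityMeasure (ℙ : Measure Ω)]
    (p0 p1 p2 : ℝ) (hp0 : 0 < p0) (hp1 : 0 < p1) (hp2 : 0 < p2)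
    (hp : p0 + p1 + p2 ≤ 1)
    (Y1 Y2 Y3 Y4 : ℕ → Ω → ℕ)
    (hmeas : ∀ i, Measurable (Y1 i) ∧ Measurable (Y2 i) ∧ Measurable (Y3 i) ∧ Measurable (Y4 i))
    (hYpos : ∀ i, (∀ᵐ ω ∂ℙ, 0 < Y1 i ω) ∧ (∀ᵐ ω ∂ℙ, 0 < Y2 i ω) ∧
      (∀ᵐ ω ∂ℙ, 0 < Y3 i ω) ∧ (∀ᵐ ω ∂ℙ, 0 < Y4 i ω))
    (hid1 : ∀ i, IdentDistrib (Y1 i) (Y1 0) ℙ ℙ)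
    (hid2 : ∀ i, IdentDistrib (Y2 i) (Y2 0) ℙ ℙ)
    (hid34 : ∀ i, IdentDistrib (fun ω => (Y3 i ω, Y4 i ω)) (fun ω => (Y3 0 ω, Y4 0 ω)) ℙ ℙ)
    (I1 I2 I0 : ℕ → Ω → ℕ)
    (hI : ∀ i, IsIndicatorTriple p0 p1 p2 (I1 i) (I2 i) (I0 i))
    (IA : ℕ → Ω → ℕ) (hIAmeas : ∀ i, Measurable (IA i))
    (hIA1 : ∀ i, (ℙ {ω | IA i ω = 1}).toReal = p0 + p1 + p2)
    (hIA0 : ∀ i, (ℙ {ω | IA i ω = 0}).toReal = 1 - (p0 + p1 + p2))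
    (hindep : iIndepFun
      (fun i : ℕ ⊕ ℕ ⊕ ℕ ⊕ ℕ ⊕ ℕ => (match i with
        | .inl i => fun ω => (Y1 i ω, 0, 0)
        | .inr (.inl i) => fun ω => (Y2 i ω, 0, 0)
        | .inr (.inr (.inl i)) => fun ω => (Y3 i ω, Y4 i ω, 0)
        | .inr (.inr (.inr (.inl i))) => fun ω => (I1 i ω, I2 i ω, I0 i ω)
        | .inr (.inr (.inr (.inr i))) => fun ω => (IA i ω, 0, 0) : Ω → ℕ × ℕ × ℕ)) ℙ)
    (Y : ℕ → Ω → ℕ)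
    (hY : ∀ i ω, Y i ω = I1 i ω * Y1 i ω + I0 i ω * (Y3 i ω + Y4 i ω) + I2 i ω * Y2 i ω)
    (hYint : Integrable (fun ω => (Y 0 ω : ℝ)) ℙ)
    (μ : ℝ) (hμ : μ = ∫ ω, (Y 0 ω : ℝ) ∂ℙ)
    (hnpc : (p0 + p1 + p2) * μ < 1)
    (z : ℝ) (hz : 1 < z)
    (hz1 : Integrable (fun ω => z ^ Y1 0 ω) ℙ)
    (hz34 : Integrable (fun ω => z ^ (Y3 0 ω + Y4 0 ω)) ℙ)
    (hz2 : Integrable (fun ω => z ^ Y2 0 ω) ℙ)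
    (heq : 1 - (p0 + p1 + p2) + p1 * (∫ ω, z ^ Y1 0 ω ∂ℙ)
        + p0 * (∫ ω, z ^ (Y3 0 ω + Y4 0 ω) ∂ℙ) + p2 * (∫ ω, z ^ Y2 0 ω ∂ℙ) = z)
    (hSmeas : ∀ n : ℕ, StronglyMeasurable
      (fun ω => ∑ i ∈ Finset.range n, ((IA i ω * Y i ω : ℤ) - 1))) :
    Martingale
      (fun n ω => z ^ (∑ i ∈ Finset.range n, ((IA i ω * Y i ω : ℤ) - 1)))
      (Filtration.natural (fun n ω => ∑ i ∈ Finset.range n, ((IA i ω * Y i ω : ℤ) - 1))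
        hSmeas) ℙ ∧
    ∀ u : ℕ,
      (ℙ {ω | ∃ n : ℕ, 0 < n ∧
          ((u : ℤ) + n - ∑ i ∈ Finset.range n, (IA i ω * Y i ω : ℤ)) < 0}).toReal ≤
        z ^ (-(u : ℤ)) := by
  classical
  have hz0 : (0:ℝ) < z := lt_trans one_pos hz
  have hzne : z ≠ 0 := ne_of_gt hz0
  have hppos : (0:ℝ) < p0 + p1 + p2 := by linarith
  have hpne : p0 + p1 + p2 ≠ 0 := ne_of_gt hppos
  set G := (fun i : ℕ ⊕ ℕ ⊕ ℕ ⊕ ℕ ⊕ ℕ => (match i with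
        | .inl i => fun ω => (Y1 i ω, 0, 0)
        | .inr (.inl i) => fun ω => (Y2 i ω, 0, 0)
        | .inr (.inr (.inl i)) => fun ω => (Y3 i ω, Y4 i ω, 0)
        | .inr (.inr (.inr (.inl i))) => fun ω => (I1 i ω, I2 i ω, I0 i ω)
        | .inr (.inr (.inr (.inr i))) => fun ω => (IA i ω, 0, 0) : Ω → ℕ × ℕ × ℕ)) with hGdef
  set S : ℕ → Ω → ℤ := fun n ω => ∑ i ∈ Finset.range n, ((IA i ω * Y i ω : ℤ) - 1) with hSdef
  set W : ℕ → Ω → ℝ := fun n ω => z ^ ((IA n ω * Y n ω : ℤ) - 1) with hWdef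
  have hGmeas : ∀ j, Measurable (G j) := by
    rintro (i | i | i | i | i) <;> simp only [hGdef]
    · exact (hmeas i).1.prodMk measurable_const
    · exact (hmeas i).2.1.prodMk measurable_const
    · exact (hmeas i).2.2.1.prodMk ((hmeas i).2.2.2.prodMk measurable_const)
    · exact (hI i).1.prodMk ((hI i).2.1.prodMk (hI i).2.2.1)
    · exact (hIAmeas i).prodMk measurable_const
  -- measurability of the increments w.r.t. a block σ-algebra
  have hXsup : ∀ (T : Set (ℕ ⊕ ℕ ⊕ ℕ ⊕ ℕ ⊕ ℕ)) (n : ℕ),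
      Sum.inl n ∈ T → Sum.inr (Sum.inl n) ∈ T → Sum.inr (Sum.inr (Sum.inl n)) ∈ T →
      Sum.inr (Sum.inr (Sum.inr (Sum.inl n))) ∈ T →
      Sum.inr (Sum.inr (Sum.inr (Sum.inr n))) ∈ T →
      Measurable[⨆ j ∈ T, MeasurableSpace.comap (G j) inferInstance]
        (fun ω => ((IA n ω * Y n ω : ℤ) - 1)) := by
    intro T n h1 h2 h3 h4 h5
    have m1 : Measurable[⨆ j ∈ T, MeasurableSpace.comap (G j) inferInstance]
        (fun ω => (Y1 n ω : ℤ)) := by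
      simpa [hGdef] using meas_biSup G T h1
        (φ := fun v : ℕ × ℕ × ℕ => (v.1 : ℤ)) (measurable_of_countable _)
    have m2 : Measurable[⨆ j ∈ T, MeasurableSpace.comap (G j) inferInstance]
        (fun ω => (Y2 n ω : ℤ)) := by
      simpa [hGdef] using meas_biSup G T h2
        (φ := fun v : ℕ × ℕ × ℕ => (v.1 : ℤ)) (measurable_of_countable _)
    have m3 : Measurable[⨆ j ∈ T, MeasurableSpace.comap (G j) inferInstance]
        (fun ω => (Y3 n ω : ℤ)) := by
      simpa [hGdef] using meas_biSup G T h3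
        (φ := fun v : ℕ × ℕ × ℕ => (v.1 : ℤ)) (measurable_of_countable _)
    have m4 : Measurable[⨆ j ∈ T, MeasurableSpace.comap (G j) inferInstance]
        (fun ω => (Y4 n ω : ℤ)) := by
      simpa [hGdef] using meas_biSup G T h3
        (φ := fun v : ℕ × ℕ × ℕ => (v.2.1 : ℤ)) (measurable_of_countable _)
    have mi1 : Measurable[⨆ j ∈ T, MeasurableSpace.comap (G j) inferInstance]
        (fun ω => (I1 n ω : ℤ)) := by
      simpa [hGdef] using meas_biSup G T h4
        (φ := fun v : ℕ × ℕ × ℕ => (v.1 : ℤ)) (measurable_of_countable _)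
    have mi2 : Measurable[⨆ j ∈ T, MeasurableSpace.comap (G j) inferInstance]
        (fun ω => (I2 n ω : ℤ)) := by
      simpa [hGdef] using meas_biSup G T h4
        (φ := fun v : ℕ × ℕ × ℕ => (v.2.1 : ℤ)) (measurable_of_countable _)
    have mi0 : Measurable[⨆ j ∈ T, MeasurableSpace.comap (G j) inferInstance]
        (fun ω => (I0 n ω : ℤ)) := by
      simpa [hGdef] using meas_biSup G T h4
        (φ := fun v : ℕ × ℕ × ℕ => (v.2.2 : ℤ)) (measurable_of_countable _)
    have ma : Measurable[⨆ j ∈ T, MeasurableSpace.comap (G j) inferInstance]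
        (fun ω => (IA n ω : ℤ)) := by
      simpa [hGdef] using meas_biSup G T h5
        (φ := fun v : ℕ × ℕ × ℕ => (v.1 : ℤ)) (measurable_of_countable _)
    have heqX : (fun ω => ((IA n ω * Y n ω : ℤ) - 1))
        = fun ω => ((IA n ω : ℤ) * ((I1 n ω : ℤ) * (Y1 n ω : ℤ)
          + (I0 n ω : ℤ) * ((Y3 n ω : ℤ) + (Y4 n ω : ℤ))
          + (I2 n ω : ℤ) * (Y2 n ω : ℤ)) - 1) := by
      funext ω; rw [hY n ω]; push_cast; ring
    rw [heqX]
    exact (ma.mul (((mi1.mul m1).add (mi0.mul (m3.add m4))).add (mi2.mul m2))).sub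
      measurable_const
  have hWsup : ∀ n, Measurable[⨆ j ∈ {j | sidx j = n}, MeasurableSpace.comap (G j) inferInstance]
      (W n) := by
    intro n
    have := hXsup {j | sidx j = n} n (by simp [sidx]) (by simp [sidx]) (by simp [sidx])
      (by simp [sidx]) (by simp [sidx])
    exact (measurable_of_countable (fun t : ℤ => z ^ t)).comp this
  have hSsup : ∀ n k, k ≤ n →
      Measurable[⨆ j ∈ {j | sidx j < n}, MeasurableSpace.comap (G j) inferInstance] (S k) := by
    intro n k hk
    apply Finset.measurable_sum
    intro i hi
    exact hXsup {j | sidx j < n} i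
      (by simp [sidx]; exact lt_of_lt_of_le (mem_range.mp hi) hk)
      (by simp [sidx]; exact lt_of_lt_of_le (mem_range.mp hi) hk)
      (by simp [sidx]; exact lt_of_lt_of_le (mem_range.mp hi) hk)
      (by simp [sidx]; exact lt_of_lt_of_le (mem_range.mp hi) hk)
      (by simp [sidx]; exact lt_of_lt_of_le (mem_range.mp hi) hk)
  have hdisj : ∀ n : ℕ, Disjoint {j | sidx j = n} {j | sidx j < n} := by
    intro n
    rw [Set.disjoint_left]
    intro j hj hj'
    simp only [Set.mem_setOf_eq] at hj hj'
    omega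
  have hIndepAtLt : ∀ n, Indep
      (⨆ j ∈ {j | sidx j = n}, MeasurableSpace.comap (G j) inferInstance)
      (⨆ j ∈ {j | sidx j < n}, MeasurableSpace.comap (G j) inferInstance) ℙ :=
    fun n => indep_iSup_of_disjoint (fun j => (hGmeas j).comap_le) hindep (hdisj n)
  have hAtle : ∀ n, (⨆ j ∈ {j | sidx j = n}, MeasurableSpace.comap (G j) inferInstance)
      ≤ (inferInstance : MeasurableSpace Ω) := by
    intro n
    exact iSup₂_le fun j _ => (hGmeas j).comap_le
  have hFle : ∀ n, Filtration.natural S hSmeas n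
      ≤ (⨆ j ∈ {j | sidx j < n}, MeasurableSpace.comap (G j) inferInstance) := by
    intro n
    show (⨆ k, ⨆ _ : k ≤ n, MeasurableSpace.comap (S k) inferInstance) ≤ _
    exact iSup₂_le fun k hk => Measurable.comap_le (hSsup n k hk)
  -- the key expectation computation
  have hkey : ∀ n, Integrable (fun ω => z ^ (IA n ω * Y n ω)) ℙ ∧
      (∫ ω, z ^ (IA n ω * Y n ω) ∂ℙ) = z := by
    intro n
    -- measurable sets
    have hA0m : MeasurableSet {ω | IA n ω = 0} := hIAmeas n (measurableSet_singleton 0)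
    have hA1m : MeasurableSet {ω | IA n ω = 1} := hIAmeas n (measurableSet_singleton 1)
    have hBm : ∀ a b c : ℕ, MeasurableSet {ω | I1 n ω = a ∧ I2 n ω = b ∧ I0 n ω = c} := by
      intro a b c
      have : {ω | I1 n ω = a ∧ I2 n ω = b ∧ I0 n ω = c}
          = I1 n ⁻¹' {a} ∩ (I2 n ⁻¹' {b} ∩ I0 n ⁻¹' {c}) := by
        ext ω; simp [Set.mem_preimage]
      rw [this]
      exact ((hI n).1 (measurableSet_singleton a)).inter
        (((hI n).2.1 (measurableSet_singleton b)).inter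
          ((hI n).2.2.1 (measurableSet_singleton c)))
    -- a.e. dichotomy for IA
    have hA_ae : ∀ᵐ ω ∂ℙ, IA n ω = 0 ∨ IA n ω = 1 := by
      have hdisjA : Disjoint {ω | IA n ω = 0} {ω | IA n ω = 1} := by
        rw [Set.disjoint_left]
        intro ω h0 h1
        simp only [Set.mem_setOf_eq] at h0 h1
        omega
      have hPA : ℙ ({ω | IA n ω = 0} ∪ {ω | IA n ω = 1}) = 1 := by
        refine (ENNReal.toReal_eq_one_iff _).mp ?_
        rw [measure_union hdisjA hA1m,
          ENNReal.toReal_add (measure_ne_top _ _) (measure_ne_top _ _), hIA0 n, hIA1 n]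
        ring
      have hc := (prob_compl_eq_zero_iff (hA0m.union hA1m)).mpr hPA
      rw [MeasureTheory.ae_iff]
      have hset : {a | ¬(IA n a = 0 ∨ IA n a = 1)}
          = ({ω | IA n ω = 0} ∪ {ω | IA n ω = 1})ᶜ := by
        ext ω; simp [Set.mem_union]
      rw [hset]
      exact hc
    -- a.e. trichotomy for the indicator triple
    have hB_ae : ∀ᵐ ω ∂ℙ, (I1 n ω = 1 ∧ I2 n ω = 0 ∧ I0 n ω = 0)
        ∨ (I1 n ω = 0 ∧ I2 n ω = 1 ∧ I0 n ω = 0)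
        ∨ (I1 n ω = 0 ∧ I2 n ω = 0 ∧ I0 n ω = 1) := by
      have hd12 : Disjoint {ω | I1 n ω = 1 ∧ I2 n ω = 0 ∧ I0 n ω = 0}
          {ω | I1 n ω = 0 ∧ I2 n ω = 1 ∧ I0 n ω = 0} := by
        rw [Set.disjoint_left]; intro ω h0 h1
        simp only [Set.mem_setOf_eq] at h0 h1; omega
      have hd10 : Disjoint {ω | I1 n ω = 1 ∧ I2 n ω = 0 ∧ I0 n ω = 0}
          {ω | I1 n ω = 0 ∧ I2 n ω = 0 ∧ I0 n ω = 1} := by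
        rw [Set.disjoint_left]; intro ω h0 h1
        simp only [Set.mem_setOf_eq] at h0 h1; omega
      have hd20 : Disjoint {ω | I1 n ω = 0 ∧ I2 n ω = 1 ∧ I0 n ω = 0}
          {ω | I1 n ω = 0 ∧ I2 n ω = 0 ∧ I0 n ω = 1} := by
        rw [Set.disjoint_left]; intro ω h0 h1
        simp only [Set.mem_setOf_eq] at h0 h1; omega
      have hPB : ℙ ({ω | I1 n ω = 1 ∧ I2 n ω = 0 ∧ I0 n ω = 0}
          ∪ ({ω | I1 n ω = 0 ∧ I2 n ω = 1 ∧ I0 n ω = 0}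
          ∪ {ω | I1 n ω = 0 ∧ I2 n ω = 0 ∧ I0 n ω = 1})) = 1 := by
        refine (ENNReal.toReal_eq_one_iff _).mp ?_
        rw [measure_union (hd12.union_right hd10) ((hBm 0 1 0).union (hBm 0 0 1)),
          measure_union hd20 (hBm 0 0 1),
          ENNReal.toReal_add (measure_ne_top _ _)
            (ENNReal.add_ne_top.mpr ⟨measure_ne_top _ _, measure_ne_top _ _⟩),
          ENNReal.toReal_add (measure_ne_top _ _) (measure_ne_top _ _),
          (hI n).2.2.2.1, (hI n).2.2.2.2.1, (hI n).2.2.2.2.2]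
        field_simp
        ring
      have hmeasU := (hBm 1 0 0).union ((hBm 0 1 0).union (hBm 0 0 1))
      have hc := (prob_compl_eq_zero_iff hmeasU).mpr hPB
      rw [MeasureTheory.ae_iff]
      have hset : {a | ¬((I1 n a = 1 ∧ I2 n a = 0 ∧ I0 n a = 0)
          ∨ (I1 n a = 0 ∧ I2 n a = 1 ∧ I0 n a = 0)
          ∨ (I1 n a = 0 ∧ I2 n a = 0 ∧ I0 n a = 1))}
          = ({ω | I1 n ω = 1 ∧ I2 n ω = 0 ∧ I0 n ω = 0}
          ∪ ({ω | I1 n ω = 0 ∧ I2 n ω = 1 ∧ I0 n ω = 0}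
          ∪ {ω | I1 n ω = 0 ∧ I2 n ω = 0 ∧ I0 n ω = 1}))ᶜ := by
        ext ω; simp [Set.mem_union]
      rw [hset]
      exact hc
    -- identically-distributed transfers
    have hId1 : IdentDistrib (fun ω => z ^ Y1 n ω) (fun ω => z ^ Y1 0 ω) ℙ ℙ :=
      (hid1 n).comp (measurable_of_countable (fun k : ℕ => z ^ k))
    have hId2 : IdentDistrib (fun ω => z ^ Y2 n ω) (fun ω => z ^ Y2 0 ω) ℙ ℙ :=
      (hid2 n).comp (measurable_of_countable (fun k : ℕ => z ^ k))
    have hId34 : IdentDistrib (fun ω => z ^ (Y3 n ω + Y4 n ω)) (fun ω => z ^ (Y3 0 ω + Y4 0 ω)) ℙ ℙ :=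
      (hid34 n).comp (measurable_of_countable (fun q : ℕ × ℕ => z ^ (q.1 + q.2)))
    have hzY1int : Integrable (fun ω => z ^ Y1 n ω) ℙ := hId1.integrable_iff.mpr hz1
    have hzY2int : Integrable (fun ω => z ^ Y2 n ω) ℙ := hId2.integrable_iff.mpr hz2
    have hzY34int : Integrable (fun ω => z ^ (Y3 n ω + Y4 n ω)) ℙ := hId34.integrable_iff.mpr hz34
    -- indicator-type functions
    set J1 : Ω → ℝ := fun ω => if I1 n ω = 1 ∧ I2 n ω = 0 ∧ I0 n ω = 0 then 1 else 0 with hJ1def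
    set J2 : Ω → ℝ := fun ω => if I1 n ω = 0 ∧ I2 n ω = 1 ∧ I0 n ω = 0 then 1 else 0 with hJ2def
    set J0 : Ω → ℝ := fun ω => if I1 n ω = 0 ∧ I2 n ω = 0 ∧ I0 n ω = 1 then 1 else 0 with hJ0def
    set JA : Ω → ℝ := fun ω => if IA n ω = 1 then 1 else 0 with hJAdef
    set J00 : Ω → ℝ := fun ω => if IA n ω = 0 then 1 else 0 with hJ00def
    have hJ1ind : J1 = Set.indicator {ω | I1 n ω = 1 ∧ I2 n ω = 0 ∧ I0 n ω = 0} (1 : Ω → ℝ) := by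
      funext ω; rw [hJ1def]; simp [Set.indicator_apply, Set.mem_setOf_eq]
    have hJ2ind : J2 = Set.indicator {ω | I1 n ω = 0 ∧ I2 n ω = 1 ∧ I0 n ω = 0} (1 : Ω → ℝ) := by
      funext ω; rw [hJ2def]; simp [Set.indicator_apply, Set.mem_setOf_eq]
    have hJ0ind : J0 = Set.indicator {ω | I1 n ω = 0 ∧ I2 n ω = 0 ∧ I0 n ω = 1} (1 : Ω → ℝ) := by
      funext ω; rw [hJ0def]; simp [Set.indicator_apply, Set.mem_setOf_eq]
    have hJAind : JA = Set.indicator {ω | IA n ω = 1} (1 : Ω → ℝ) := by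
      funext ω; rw [hJAdef]; simp [Set.indicator_apply, Set.mem_setOf_eq]
    have hJ00ind : J00 = Set.indicator {ω | IA n ω = 0} (1 : Ω → ℝ) := by
      funext ω; rw [hJ00def]; simp [Set.indicator_apply, Set.mem_setOf_eq]
    have hJ1int : Integrable J1 ℙ := by rw [hJ1ind]; exact (integrable_const 1).indicator (hBm 1 0 0)
    have hJ2int : Integrable J2 ℙ := by rw [hJ2ind]; exact (integrable_const 1).indicator (hBm 0 1 0)
    have hJ0int : Integrable J0 ℙ := by rw [hJ0ind]; exact (integrable_const 1).indicator (hBm 0 0 1)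
    have hJAint : Integrable JA ℙ := by rw [hJAind]; exact (integrable_const 1).indicator hA1m
    have hJ00int : Integrable J00 ℙ := by rw [hJ00ind]; exact (integrable_const 1).indicator hA0m
    have hJ1m : AEStronglyMeasurable J1 ℙ := hJ1int.aestronglyMeasurable
    have hJ2m : AEStronglyMeasurable J2 ℙ := hJ2int.aestronglyMeasurable
    have hJ0m : AEStronglyMeasurable J0 ℙ := hJ0int.aestronglyMeasurable
    have hJAm : AEStronglyMeasurable JA ℙ := hJAint.aestronglyMeasurable
    have hJ1mean : ∫ ω, J1 ω ∂ℙ = p1 / (p0 + p1 + p2) := by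
      rw [hJ1ind, integral_indicator_one (hBm 1 0 0)]
      exact (hI n).2.2.2.1
    have hJ2mean : ∫ ω, J2 ω ∂ℙ = p2 / (p0 + p1 + p2) := by
      rw [hJ2ind, integral_indicator_one (hBm 0 1 0)]
      exact (hI n).2.2.2.2.1
    have hJ0mean : ∫ ω, J0 ω ∂ℙ = p0 / (p0 + p1 + p2) := by
      rw [hJ0ind, integral_indicator_one (hBm 0 0 1)]
      exact (hI n).2.2.2.2.2
    have hJAmean : ∫ ω, JA ω ∂ℙ = p0 + p1 + p2 := by
      rw [hJAind, integral_indicator_one hA1m]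
      exact hIA1 n
    have hJ00mean : ∫ ω, J00 ω ∂ℙ = 1 - (p0 + p1 + p2) := by
      rw [hJ00ind, integral_indicator_one hA0m]
      exact hIA0 n
    have hzY1m : AEStronglyMeasurable (fun ω => z ^ Y1 n ω) ℙ := hzY1int.aestronglyMeasurable
    have hzY2m : AEStronglyMeasurable (fun ω => z ^ Y2 n ω) ℙ := hzY2int.aestronglyMeasurable
    have hzY34m : AEStronglyMeasurable (fun ω => z ^ (Y3 n ω + Y4 n ω)) ℙ :=
      hzY34int.aestronglyMeasurable
    -- independence of pieces
    have iJ1z : IndepFun J1 (fun ω => z ^ Y1 n ω) ℙ := by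
      have h := (hindep.indepFun
        (show (Sum.inr (Sum.inr (Sum.inr (Sum.inl n))) : ℕ ⊕ ℕ ⊕ ℕ ⊕ ℕ ⊕ ℕ) ≠ Sum.inl n by simp)).comp
        (φ := fun v : ℕ × ℕ × ℕ => if v.1 = 1 ∧ v.2.1 = 0 ∧ v.2.2 = 0 then (1:ℝ) else 0)
        (ψ := fun v : ℕ × ℕ × ℕ => z ^ v.1)
        (measurable_of_countable _) (measurable_of_countable _)
      have e1 : (fun v : ℕ × ℕ × ℕ => if v.1 = 1 ∧ v.2.1 = 0 ∧ v.2.2 = 0 then (1:ℝ) else 0)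
          ∘ (G (Sum.inr (Sum.inr (Sum.inr (Sum.inl n))))) = J1 := by
        funext ω; simp [hGdef, hJ1def, Function.comp]
      have e2 : (fun v : ℕ × ℕ × ℕ => z ^ v.1) ∘ (G (Sum.inl n)) = fun ω => z ^ Y1 n ω := by
        funext ω; simp [hGdef, Function.comp]
      rwa [e1, e2] at h
    have iJ2z : IndepFun J2 (fun ω => z ^ Y2 n ω) ℙ := by
      have h := (hindep.indepFun
        (show (Sum.inr (Sum.inr (Sum.inr (Sum.inl n))) : ℕ ⊕ ℕ ⊕ ℕ ⊕ ℕ ⊕ ℕ) ≠ Sum.inr (Sum.inl n) by simp)).comp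
        (φ := fun v : ℕ × ℕ × ℕ => if v.1 = 0 ∧ v.2.1 = 1 ∧ v.2.2 = 0 then (1:ℝ) else 0)
        (ψ := fun v : ℕ × ℕ × ℕ => z ^ v.1)
        (measurable_of_countable _) (measurable_of_countable _)
      have e1 : (fun v : ℕ × ℕ × ℕ => if v.1 = 0 ∧ v.2.1 = 1 ∧ v.2.2 = 0 then (1:ℝ) else 0)
          ∘ (G (Sum.inr (Sum.inr (Sum.inr (Sum.inl n))))) = J2 := by
        funext ω; simp [hGdef, hJ2def, Function.comp]
      have e2 : (fun v : ℕ × ℕ × ℕ => z ^ v.1) ∘ (G (Sum.inr (Sum.inl n))) = fun ω => z ^ Y2 n ω := by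
        funext ω; simp [hGdef, Function.comp]
      rwa [e1, e2] at h
    have iJ0z : IndepFun J0 (fun ω => z ^ (Y3 n ω + Y4 n ω)) ℙ := by
      have h := (hindep.indepFun
        (show (Sum.inr (Sum.inr (Sum.inr (Sum.inl n))) : ℕ ⊕ ℕ ⊕ ℕ ⊕ ℕ ⊕ ℕ) ≠ Sum.inr (Sum.inr (Sum.inl n)) by simp)).comp
        (φ := fun v : ℕ × ℕ × ℕ => if v.1 = 0 ∧ v.2.1 = 0 ∧ v.2.2 = 1 then (1:ℝ) else 0)
        (ψ := fun v : ℕ × ℕ × ℕ => z ^ (v.1 + v.2.1))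
        (measurable_of_countable _) (measurable_of_countable _)
      have e1 : (fun v : ℕ × ℕ × ℕ => if v.1 = 0 ∧ v.2.1 = 0 ∧ v.2.2 = 1 then (1:ℝ) else 0)
          ∘ (G (Sum.inr (Sum.inr (Sum.inr (Sum.inl n))))) = J0 := by
        funext ω; simp [hGdef, hJ0def, Function.comp]
      have e2 : (fun v : ℕ × ℕ × ℕ => z ^ (v.1 + v.2.1)) ∘ (G (Sum.inr (Sum.inr (Sum.inl n))))
          = fun ω => z ^ (Y3 n ω + Y4 n ω) := by
        funext ω; simp [hGdef, Function.comp]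
      rwa [e1, e2] at h
    have iF1A : IndepFun (fun ω => J1 ω * z ^ Y1 n ω) JA ℙ := by
      have h := (hindep.indepFun_prodMk hGmeas
        (Sum.inr (Sum.inr (Sum.inr (Sum.inl n)))) (Sum.inl n)
        (Sum.inr (Sum.inr (Sum.inr (Sum.inr n)))) (by simp) (by simp)).comp
        (φ := fun v : (ℕ × ℕ × ℕ) × (ℕ × ℕ × ℕ) =>
          (if v.1.1 = 1 ∧ v.1.2.1 = 0 ∧ v.1.2.2 = 0 then (1:ℝ) else 0) * z ^ v.2.1)
        (ψ := fun v : ℕ × ℕ × ℕ => if v.1 = 1 then (1:ℝ) else 0)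
        (measurable_of_countable _) (measurable_of_countable _)
      have e1 : (fun v : (ℕ × ℕ × ℕ) × (ℕ × ℕ × ℕ) =>
          (if v.1.1 = 1 ∧ v.1.2.1 = 0 ∧ v.1.2.2 = 0 then (1:ℝ) else 0) * z ^ v.2.1)
          ∘ (fun ω => (G (Sum.inr (Sum.inr (Sum.inr (Sum.inl n)))) ω, G (Sum.inl n) ω))
          = fun ω => J1 ω * z ^ Y1 n ω := by
        funext ω; simp [hGdef, hJ1def, Function.comp]
      have e2 : (fun v : ℕ × ℕ × ℕ => if v.1 = 1 then (1:ℝ) else 0)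
          ∘ (G (Sum.inr (Sum.inr (Sum.inr (Sum.inr n))))) = JA := by
        funext ω; simp [hGdef, hJAdef, Function.comp]
      rwa [e1, e2] at h
    have iF2A : IndepFun (fun ω => J2 ω * z ^ Y2 n ω) JA ℙ := by
      have h := (hindep.indepFun_prodMk hGmeas
        (Sum.inr (Sum.inr (Sum.inr (Sum.inl n)))) (Sum.inr (Sum.inl n))
        (Sum.inr (Sum.inr (Sum.inr (Sum.inr n)))) (by simp) (by simp)).comp
        (φ := fun v : (ℕ × ℕ × ℕ) × (ℕ × ℕ × ℕ) =>
          (if v.1.1 = 0 ∧ v.1.2.1 = 1 ∧ v.1.2.2 = 0 then (1:ℝ) else 0) * z ^ v.2.1)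
        (ψ := fun v : ℕ × ℕ × ℕ => if v.1 = 1 then (1:ℝ) else 0)
        (measurable_of_countable _) (measurable_of_countable _)
      have e1 : (fun v : (ℕ × ℕ × ℕ) × (ℕ × ℕ × ℕ) =>
          (if v.1.1 = 0 ∧ v.1.2.1 = 1 ∧ v.1.2.2 = 0 then (1:ℝ) else 0) * z ^ v.2.1)
          ∘ (fun ω => (G (Sum.inr (Sum.inr (Sum.inr (Sum.inl n)))) ω, G (Sum.inr (Sum.inl n)) ω))
          = fun ω => J2 ω * z ^ Y2 n ω := by
        funext ω; simp [hGdef, hJ2def, Function.comp]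
      have e2 : (fun v : ℕ × ℕ × ℕ => if v.1 = 1 then (1:ℝ) else 0)
          ∘ (G (Sum.inr (Sum.inr (Sum.inr (Sum.inr n))))) = JA := by
        funext ω; simp [hGdef, hJAdef, Function.comp]
      rwa [e1, e2] at h
    have iF0A : IndepFun (fun ω => J0 ω * z ^ (Y3 n ω + Y4 n ω)) JA ℙ := by
      have h := (hindep.indepFun_prodMk hGmeas
        (Sum.inr (Sum.inr (Sum.inr (Sum.inl n)))) (Sum.inr (Sum.inr (Sum.inl n)))
        (Sum.inr (Sum.inr (Sum.inr (Sum.inr n)))) (by simp) (by simp)).comp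
        (φ := fun v : (ℕ × ℕ × ℕ) × (ℕ × ℕ × ℕ) =>
          (if v.1.1 = 0 ∧ v.1.2.1 = 0 ∧ v.1.2.2 = 1 then (1:ℝ) else 0) * z ^ (v.2.1 + v.2.2.1))
        (ψ := fun v : ℕ × ℕ × ℕ => if v.1 = 1 then (1:ℝ) else 0)
        (measurable_of_countable _) (measurable_of_countable _)
      have e1 : (fun v : (ℕ × ℕ × ℕ) × (ℕ × ℕ × ℕ) =>
          (if v.1.1 = 0 ∧ v.1.2.1 = 0 ∧ v.1.2.2 = 1 then (1:ℝ) else 0) * z ^ (v.2.1 + v.2.2.1))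
          ∘ (fun ω => (G (Sum.inr (Sum.inr (Sum.inr (Sum.inl n)))) ω, G (Sum.inr (Sum.inr (Sum.inl n))) ω))
          = fun ω => J0 ω * z ^ (Y3 n ω + Y4 n ω) := by
        funext ω; simp [hGdef, hJ0def, Function.comp]
      have e2 : (fun v : ℕ × ℕ × ℕ => if v.1 = 1 then (1:ℝ) else 0)
          ∘ (G (Sum.inr (Sum.inr (Sum.inr (Sum.inr n))))) = JA := by
        funext ω; simp [hGdef, hJAdef, Function.comp]
      rwa [e1, e2] at h
    -- integrability and means of products
    have hF1int : Integrable (fun ω => J1 ω * z ^ Y1 n ω) ℙ := by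
      exact iJ1z.integrable_mul hJ1int hzY1int
    have hF2int : Integrable (fun ω => J2 ω * z ^ Y2 n ω) ℙ := by
      exact iJ2z.integrable_mul hJ2int hzY2int
    have hF0int : Integrable (fun ω => J0 ω * z ^ (Y3 n ω + Y4 n ω)) ℙ := by
      exact iJ0z.integrable_mul hJ0int hzY34int
    have hG1int : Integrable (fun ω => J1 ω * z ^ Y1 n ω * JA ω) ℙ := by
      exact iF1A.integrable_mul hF1int hJAint
    have hG2int : Integrable (fun ω => J2 ω * z ^ Y2 n ω * JA ω) ℙ := by
      exact iF2A.integrable_mul hF2int hJAint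
    have hG0int : Integrable (fun ω => J0 ω * z ^ (Y3 n ω + Y4 n ω) * JA ω) ℙ := by
      exact iF0A.integrable_mul hF0int hJAint
    have hF1mean : ∫ ω, J1 ω * z ^ Y1 n ω ∂ℙ
        = (p1 / (p0 + p1 + p2)) * ∫ ω, z ^ Y1 0 ω ∂ℙ := by
      rw [iJ1z.integral_fun_mul_eq_mul_integral hJ1m hzY1m, hJ1mean, hId1.integral_eq]
    have hF2mean : ∫ ω, J2 ω * z ^ Y2 n ω ∂ℙ
        = (p2 / (p0 + p1 + p2)) * ∫ ω, z ^ Y2 0 ω ∂ℙ := by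
      rw [iJ2z.integral_fun_mul_eq_mul_integral hJ2m hzY2m, hJ2mean, hId2.integral_eq]
    have hF0mean : ∫ ω, J0 ω * z ^ (Y3 n ω + Y4 n ω) ∂ℙ
        = (p0 / (p0 + p1 + p2)) * ∫ ω, z ^ (Y3 0 ω + Y4 0 ω) ∂ℙ := by
      rw [iJ0z.integral_fun_mul_eq_mul_integral hJ0m hzY34m, hJ0mean, hId34.integral_eq]
    have hG1mean : ∫ ω, J1 ω * z ^ Y1 n ω * JA ω ∂ℙ
        = ((p1 / (p0 + p1 + p2)) * ∫ ω, z ^ Y1 0 ω ∂ℙ) * (p0 + p1 + p2) := by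
      rw [iF1A.integral_fun_mul_eq_mul_integral hF1int.aestronglyMeasurable hJAm, hF1mean, hJAmean]
    have hG2mean : ∫ ω, J2 ω * z ^ Y2 n ω * JA ω ∂ℙ
        = ((p2 / (p0 + p1 + p2)) * ∫ ω, z ^ Y2 0 ω ∂ℙ) * (p0 + p1 + p2) := by
      rw [iF2A.integral_fun_mul_eq_mul_integral hF2int.aestronglyMeasurable hJAm, hF2mean, hJAmean]
    have hG0mean : ∫ ω, J0 ω * z ^ (Y3 n ω + Y4 n ω) * JA ω ∂ℙ
        = ((p0 / (p0 + p1 + p2)) * ∫ ω, z ^ (Y3 0 ω + Y4 0 ω) ∂ℙ) * (p0 + p1 + p2) := by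
      rw [iF0A.integral_fun_mul_eq_mul_integral hF0int.aestronglyMeasurable hJAm, hF0mean, hJAmean]
    -- a.e. decomposition
    set g : Ω → ℝ := fun ω => J00 ω + J1 ω * z ^ Y1 n ω * JA ω
      + J0 ω * z ^ (Y3 n ω + Y4 n ω) * JA ω
      + J2 ω * z ^ Y2 n ω * JA ω with hgdef
    have hsum1 : Integrable (fun ω => J00 ω + J1 ω * z ^ Y1 n ω * JA ω) ℙ := by
      exact hJ00int.add hG1int
    have hsum2 : Integrable (fun ω => J00 ω + J1 ω * z ^ Y1 n ω * JA ω
        + J0 ω * z ^ (Y3 n ω + Y4 n ω) * JA ω) ℙ := by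
      exact hsum1.add hG0int
    have hgint : Integrable g ℙ := by
      rw [hgdef]; exact hsum2.add hG2int
    have hae : g =ᵐ[ℙ] fun ω => z ^ (IA n ω * Y n ω) := by
      filter_upwards [hA_ae, hB_ae] with ω hA hB
      simp only [hgdef, hJ1def, hJ2def, hJ0def, hJAdef, hJ00def]
      rcases hA with h0 | h1
      · simp [h0]
      · rcases hB with ⟨ha, hb, hc⟩ | ⟨ha, hb, hc⟩ | ⟨ha, hb, hc⟩ <;>
          simp [h1, ha, hb, hc, hY n ω]
    have hVint : Integrable (fun ω => z ^ (IA n ω * Y n ω)) ℙ := hgint.congr hae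
    refine ⟨hVint, ?_⟩
    rw [← integral_congr_ae hae]
    simp only [hgdef]
    rw [integral_add hsum2 hG2int, integral_add hsum1 hG0int, integral_add hJ00int hG1int]
    rw [hJ00mean, hG1mean, hG0mean, hG2mean]
    have e1 : (p1 / (p0 + p1 + p2) * ∫ ω, z ^ Y1 0 ω ∂ℙ) * (p0 + p1 + p2)
        = p1 * ∫ ω, z ^ Y1 0 ω ∂ℙ := by field_simp
    have e2 : (p2 / (p0 + p1 + p2) * ∫ ω, z ^ Y2 0 ω ∂ℙ) * (p0 + p1 + p2)
        = p2 * ∫ ω, z ^ Y2 0 ω ∂ℙ := by field_simp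
    have e0 : (p0 / (p0 + p1 + p2) * ∫ ω, z ^ (Y3 0 ω + Y4 0 ω) ∂ℙ) * (p0 + p1 + p2)
        = p0 * ∫ ω, z ^ (Y3 0 ω + Y4 0 ω) ∂ℙ := by field_simp
    rw [e1, e2, e0]
    linarith [heq]
  have hWeq : ∀ n, W n = fun ω => (z ^ (IA n ω * Y n ω)) / z := by
    intro n
    funext ω
    show z ^ ((IA n ω * Y n ω : ℤ) - 1) = _
    rw [zpow_sub₀ hzne, zpow_one, ← Nat.cast_mul, zpow_natCast]
  have hWint : ∀ n, Integrable (W n) ℙ := by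
    intro n; rw [hWeq n]; exact (hkey n).1.div_const z
  have hWmean : ∀ n, (∫ ω, W n ω ∂ℙ) = 1 := by
    intro n
    rw [hWeq n]
    rw [integral_div, (hkey n).2, div_self hzne]
  have hWZindep : ∀ n, IndepFun (W n) (fun ω => z ^ S n ω) ℙ := by
    intro n
    have hZm : Measurable[⨆ j ∈ {j | sidx j < n}, MeasurableSpace.comap (G j) inferInstance]
        (fun ω => z ^ S n ω) :=
      (measurable_of_countable (fun t : ℤ => z ^ t)).comp (hSsup n n le_rfl)
    exact indep_mono' (hIndepAtLt n) (Measurable.comap_le (hWsup n)) (Measurable.comap_le hZm)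
  have hZsucc : ∀ n, (fun ω => z ^ S (n + 1) ω) = fun ω => z ^ S n ω * W n ω := by
    intro n
    funext ω
    rw [hSdef, hWdef]
    simp only [Finset.sum_range_succ]
    rw [zpow_add₀ hzne]
  have hZint : ∀ n, Integrable (fun ω => z ^ S n ω) ℙ ∧ (∫ ω, z ^ S n ω ∂ℙ) = 1 := by
    intro n
    induction n with
    | zero =>
      have h0 : (fun ω : Ω => z ^ S 0 ω) = fun _ => (1 : ℝ) := by
        funext ω; rw [hSdef]; simp
      rw [h0]
      exact ⟨integrable_const 1, by simp⟩
    | succ n ih =>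
      rw [hZsucc n]
      have hind := (hWZindep n).symm
      constructor
      · exact hind.integrable_mul ih.1 (hWint n)
      · have := hind.integral_mul_eq_mul_integral (ih.1.aestronglyMeasurable) ((hWint n).aestronglyMeasurable)
        rw [show ((fun ω => z ^ S n ω) * W n) = fun ω => z ^ S n ω * W n ω from rfl] at this
        rw [this, ih.2, hWmean n, one_mul]
  have hAdapted : StronglyAdapted (Filtration.natural S hSmeas) (fun n ω => z ^ S n ω) := by
    intro n
    exact ((measurable_of_countable (fun t : ℤ => z ^ t)).comp
      (Filtration.stronglyAdapted_natural hSmeas n).measurable).stronglyMeasurable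
  have hM : Martingale (fun n ω => z ^ S n ω) (Filtration.natural S hSmeas) ℙ := by
    refine martingale_nat hAdapted (fun n => (hZint n).1) (fun n => ?_)
    have hmul : ((fun ω => z ^ S n ω) * W n) = fun ω => z ^ S (n + 1) ω := by
      rw [hZsucc n]; rfl
    have h2 := condExp_mul_of_stronglyMeasurable_left (μ := ℙ) (hAdapted n)
      (by rw [hmul]; exact (hZint (n + 1)).1) (hWint n)
    have h3 : (ℙ : Measure Ω)[W n|Filtration.natural S hSmeas n]
        =ᵐ[ℙ] fun _ => ∫ ω, W n ω ∂ℙ :=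
      condExp_indep_eq (hAtle n) ((Filtration.natural S hSmeas).le n)
        ((hWsup n).stronglyMeasurable)
        (indep_mono' (hIndepAtLt n) le_rfl (hFle n))
    rw [← hmul]
    refine (h2.trans ?_).symm
    filter_upwards [h3] with ω hω
    simp only [Pi.mul_apply, hω, hWmean n, mul_one]
  refine ⟨hM, ?_⟩
  intro u
  have hεpos : (0:ℝ) < z ^ (u + 1) := by positivity
  set ε : ℝ≥0 := ⟨z ^ (u + 1), le_of_lt hεpos⟩ with hεdef
  have hεR : (ε : ℝ) = z ^ (u + 1) := rfl
  have hεne0 : (ε : ℝ≥0∞) ≠ 0 := by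
    simp only [ne_eq, ENNReal.coe_eq_zero]
    intro hcontr
    have : (ε : ℝ) = 0 := by rw [hcontr]; simp
    rw [hεR] at this
    exact absurd this (ne_of_gt hεpos)
  have hnonneg : 0 ≤ (fun n ω => z ^ S n ω) :=
    fun n => Pi.le_def.mpr fun ω => zpow_nonneg hz0.le _
  -- Doob bound for each finite horizon
  have hD : ∀ n : ℕ, ℙ {ω | (ε:ℝ) ≤ (range (n+1)).sup' nonempty_range_add_one
      fun k => z ^ S k ω} ≤ (ε : ℝ≥0∞)⁻¹ := by
    intro n
    have h1 := maximal_ineq hM.submartingale hnonneg (ε := ε) n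
    have h2 : ENNReal.ofReal (∫ ω in {ω | (ε:ℝ) ≤ (range (n+1)).sup' nonempty_range_add_one
        fun k => z ^ S k ω}, z ^ S n ω ∂ℙ) ≤ 1 := by
      have hsi := setIntegral_le_integral (μ := ℙ)
        (s := {ω | (ε:ℝ) ≤ (range (n+1)).sup' nonempty_range_add_one fun k => z ^ S k ω})
        (hZint n).1 (Filter.Eventually.of_forall fun ω => zpow_nonneg hz0.le _)
      calc ENNReal.ofReal (∫ ω in {ω | (ε:ℝ) ≤ (range (n+1)).sup' nonempty_range_add_one
          fun k => z ^ S k ω}, z ^ S n ω ∂ℙ)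
          ≤ ENNReal.ofReal (∫ ω, z ^ S n ω ∂ℙ) := ENNReal.ofReal_le_ofReal hsi
        _ = 1 := by rw [(hZint n).2]; simp
    have h3 : (ε : ℝ≥0∞) * ℙ {ω | (ε:ℝ) ≤ (range (n+1)).sup' nonempty_range_add_one
        fun k => z ^ S k ω} ≤ 1 := by
      refine le_trans ?_ (le_trans h1 h2)
      exact le_rfl
    calc ℙ {ω | (ε:ℝ) ≤ (range (n+1)).sup' nonempty_range_add_one fun k => z ^ S k ω}
        = (ε : ℝ≥0∞)⁻¹ * ((ε : ℝ≥0∞) * ℙ {ω | (ε:ℝ) ≤ (range (n+1)).sup' nonempty_range_add_one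
            fun k => z ^ S k ω}) := by
          rw [← mul_assoc, ENNReal.inv_mul_cancel hεne0 ENNReal.coe_ne_top, one_mul]
      _ ≤ (ε : ℝ≥0∞)⁻¹ * 1 := mul_le_mul_right h3 _
      _ = (ε : ℝ≥0∞)⁻¹ := mul_one _
  -- the ruin event is contained in the union of the maximal events
  have hsubset : {ω | ∃ n : ℕ, 0 < n ∧
      ((u : ℤ) + n - ∑ i ∈ Finset.range n, (IA i ω * Y i ω : ℤ)) < 0}
      ⊆ ⋃ n : ℕ, {ω | (ε:ℝ) ≤ (range (n+1)).sup' nonempty_range_add_one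
        fun k => z ^ S k ω} := by
    rintro ω ⟨n, hn, hlt⟩
    refine Set.mem_iUnion.mpr ⟨n, ?_⟩
    have hSn : (u : ℤ) + 1 ≤ S n ω := by
      have hsum : S n ω = (∑ i ∈ Finset.range n, (IA i ω * Y i ω : ℤ)) - n := by
        simp only [hSdef]
        rw [Finset.sum_sub_distrib]
        simp
      omega
    have hεle : (ε : ℝ) ≤ z ^ S n ω := by
      rw [hεR]
      have h1 : z ^ (u + 1) = z ^ (((u + 1 : ℕ) : ℤ)) := by rw [zpow_natCast]
      rw [h1]
      refine zpow_le_zpow_right₀ hz.le ?_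
      push_cast
      omega
    show (ε : ℝ) ≤ _
    exact le_trans hεle (Finset.le_sup' (fun k => z ^ S k ω) (self_mem_range_succ n))
  have hdir : Directed (· ⊆ ·) (fun n : ℕ => {ω | (ε:ℝ) ≤ (range (n+1)).sup' nonempty_range_add_one
      fun k => z ^ S k ω}) := by
    have hmono : Monotone (fun n : ℕ => {ω | (ε:ℝ) ≤ (range (n+1)).sup' nonempty_range_add_one
        fun k => z ^ S k ω}) := by
      intro a b hab ω hω
      simp only [Set.mem_setOf_eq] at hω ⊢
      refine le_trans hω ?_
      exact Finset.sup'_mono (fun k => z ^ S k ω)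
        (Finset.range_subset_range.mpr (Nat.succ_le_succ hab)) nonempty_range_add_one
    exact hmono.directed_le
  have hle : ℙ {ω | ∃ n : ℕ, 0 < n ∧
      ((u : ℤ) + n - ∑ i ∈ Finset.range n, (IA i ω * Y i ω : ℤ)) < 0} ≤ (ε : ℝ≥0∞)⁻¹ := by
    refine le_trans (measure_mono hsubset) ?_
    rw [hdir.measure_iUnion]
    exact iSup_le hD
  have htoReal : (ℙ {ω | ∃ n : ℕ, 0 < n ∧
      ((u : ℤ) + n - ∑ i ∈ Finset.range n, (IA i ω * Y i ω : ℤ)) < 0}).toReal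
      ≤ ((ε : ℝ≥0∞)⁻¹).toReal :=
    ENNReal.toReal_mono (ENNReal.inv_ne_top.mpr hεne0) hle
  refine le_trans htoReal ?_
  have h4 : ((ε : ℝ≥0∞)⁻¹).toReal = (z ^ (u + 1))⁻¹ := by
    rw [ENNReal.toReal_inv]
    rw [ENNReal.coe_toReal, hεR]
  rw [h4]
  have h5 : (z ^ (u + 1))⁻¹ = z ^ (-((u : ℤ) + 1)) := by
    rw [show (-((u : ℤ) + 1)) = (-((u + 1 : ℕ) : ℤ)) by omega, zpow_neg, zpow_natCast]
  rw [h5]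
  refine zpow_le_zpow_right₀ hz.le ?_
  omega
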